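/- For every finite set PROP of propositional variables and fresh variable w ∉ PROP: (1) PL_{3XOR}[PROP] ≤_pc PL_{oxor}[PROP ∪ {w}], and (2) PL_{3XOR}[PROP] ≤_pc PL_{aimp}[PROP ∪ {w}]. -/

import Mathlib

set_option maxHeartbeats 1000000

/-! ### Modal formulas -/

inductive MF : Type
  | var : ℕ → MF
  | neg : MF → MF
  | and : MF → MF → MF
  | or : MF → MF → MF
  | dia : MF → MF
  | box : MF → MF

namespace MF

/-- Implication `φ → ψ`, as the abbreviation `¬φ ∨ ψ`. -/
def imp (φ ψ : MF) : MF := .or (.neg φ) ψ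

/-- Bi-implication `φ ↔ ψ`. -/
def iff (φ ψ : MF) : MF := .and (φ.imp ψ) (ψ.imp φ)

/-- `⊥` abbreviates `p ∧ ¬p`. -/
def bot : MF := .and (.var 0) (.neg (.var 0))

/-- `⊤` abbreviates `p ∨ ¬p`. -/
def top : MF := .or (.var 0) (.neg (.var 0))

/-- A formula is purely propositional if it contains no modal operators. -/
def isProp : MF → Prop
  | .var _ => True
  | .neg φ => φ.isProp
  | .and φ ψ => φ.isProp ∧ ψ.isProp
  | .or φ ψ => φ.isProp ∧ ψ.isProp
  | .dia _ => False
  | .box _ => False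

/-- Boolean evaluation (meaningful for purely propositional formulas). -/
def propEval (v : ℕ → Bool) : MF → Bool
  | .var n => v n
  | .neg φ => !(propEval v φ)
  | .and φ ψ => propEval v φ && propEval v ψ
  | .or φ ψ => propEval v φ || propEval v ψ
  | .dia φ => propEval v φ
  | .box φ => propEval v φ

/-- Propositional tautologies. -/
def isTautology (φ : MF) : Prop := φ.isProp ∧ ∀ v, φ.propEval v = true

/-- Uniform substitution. -/
def subst (σ : ℕ → MF) : MF → MF
  | .var n => σ n
  | .neg φ => .neg (φ.subst σ)
  | .and φ ψ => .and (φ.subst σ) (ψ.subst σ)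
  | .or φ ψ => .or (φ.subst σ) (ψ.subst σ)
  | .dia φ => .dia (φ.subst σ)
  | .box φ => .box (φ.subst σ)

/-- The set of propositional variables occurring in a formula. -/
def vars : MF → Set ℕ
  | .var n => {n}
  | .neg φ => φ.vars
  | .and φ ψ => φ.vars ∪ ψ.vars
  | .or φ ψ => φ.vars ∪ ψ.vars
  | .dia φ => φ.vars
  | .box φ => φ.vars

/-- Kripke satisfaction. -/
def sat {W : Type} (R : W → W → Prop) (V : ℕ → W → Prop) : MF → W → Prop
  | .var n, w => V n w
  | .neg φ, w => ¬ sat R V φ w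
  | .and φ ψ, w => sat R V φ w ∧ sat R V ψ w
  | .or φ ψ, w => sat R V φ w ∨ sat R V ψ w
  | .dia φ, w => ∃ u, R w u ∧ sat R V φ u
  | .box φ, w => ∀ u, R w u → sat R V φ u

/-- `◇^n φ`. -/
def diaIter : ℕ → MF → MF
  | 0, φ => φ
  | n + 1, φ => .dia (diaIter n φ)

/-- `□^n φ`. -/
def boxIter : ℕ → MF → MF
  | 0, φ => φ
  | n + 1, φ => .box (boxIter n φ)

/-- `◇^{≤n} φ`, the disjunction of `◇^k φ` for `0 ≤ k ≤ n`. -/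
def diaLe : ℕ → MF → MF
  | 0, φ => φ
  | n + 1, φ => .or (diaLe n φ) (diaIter (n + 1) φ)

/-- An injective numeric encoding of modal formulas. -/
def encodeMF : MF → ℕ
  | .var n => Nat.pair 0 n
  | .neg φ => Nat.pair 1 φ.encodeMF
  | .and φ ψ => Nat.pair 2 (Nat.pair φ.encodeMF ψ.encodeMF)
  | .or φ ψ => Nat.pair 3 (Nat.pair φ.encodeMF ψ.encodeMF)
  | .dia φ => Nat.pair 4 φ.encodeMF
  | .box φ => Nat.pair 5 φ.encodeMF

end MF

/-- A normal modal logic. -/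
structure NormalLogic (Λ : Set MF) : Prop where
  taut : ∀ φ, φ.isTautology → φ ∈ Λ
  axK : ∀ φ ψ, ((MF.box (φ.imp ψ)).imp ((MF.box φ).imp (MF.box ψ))) ∈ Λ
  dual : ∀ φ, ((MF.dia φ).iff (MF.neg (MF.box (MF.neg φ)))) ∈ Λ
  mp : ∀ φ ψ, φ.imp ψ ∈ Λ → φ ∈ Λ → ψ ∈ Λ
  usubst : ∀ φ (σ : ℕ → MF), φ ∈ Λ → φ.subst σ ∈ Λ
  nec : ∀ φ, φ ∈ Λ → MF.box φ ∈ Λ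

/-- Validity on the frame `F_⊙` consisting of a single reflexive world. -/
def validOnReflPoint (φ : MF) : Prop :=
  ∀ V : ℕ → Prop, MF.sat (W := Unit) (fun _ _ => True) (fun n _ => V n) φ ()

/-- Validity on the frame `F_•` consisting of a single irreflexive world. -/
def validOnIrreflPoint (φ : MF) : Prop :=
  ∀ V : ℕ → Prop, MF.sat (W := Unit) (fun _ _ => False) (fun n _ => V n) φ ()

/-- Type A: `F_⊙ ⊨ Λ`. -/
def TypeA (Λ : Set MF) : Prop := ∀ φ ∈ Λ, validOnReflPoint φ

/-- Type B: `F_• ⊨ Λ` and `Λ ⊢ □^n ⊥` for some `n ≥ 1`. -/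
def TypeB (Λ : Set MF) : Prop :=
  (∀ φ ∈ Λ, validOnIrreflPoint φ) ∧ ∃ n ≥ 1, MF.boxIter n MF.bot ∈ Λ

/-- Type C: `F_• ⊨ Λ`, `Λ ⊬ □^n ⊥` for all `n ≥ 1`, `Λ ⊢ ◇^{≤n} □⊥` for some `n ≥ 1`. -/
def TypeC (Λ : Set MF) : Prop :=
  (∀ φ ∈ Λ, validOnIrreflPoint φ) ∧ (∀ n ≥ 1, MF.boxIter n MF.bot ∉ Λ) ∧
    ∃ n ≥ 1, MF.diaLe n (MF.box MF.bot) ∈ Λ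

/-- The (expansions of the) fragment `ML_Φ`: the smallest set of modal formulas containing
all propositional variables and closed under applying the connectives given by the formulas in
`Φ` (i.e., substituting fragment formulas into a member of `Φ`). -/
inductive MLFrag (Φ : Set MF) : MF → Prop
  | var (n : ℕ) : MLFrag Φ (MF.var n)
  | app (φ : MF) (hφ : φ ∈ Φ) (σ : ℕ → MF) (hσ : ∀ n, MLFrag Φ (σ n)) :
      MLFrag Φ (φ.subst σ)

/-- Expressive containment `ML_Φ ≼^Λ ML_Ψ`. -/
def exprLe (Λ : Set MF) (Φ Ψ : Set MF) : Prop :=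
  ∀ φ, MLFrag Φ φ → ∃ ψ, MLFrag Ψ ψ ∧ (φ.iff ψ) ∈ Λ

/-- Expressive equivalence with respect to `Λ`. -/
def exprEq (Λ : Set MF) (Φ Ψ : Set MF) : Prop := exprLe Λ Φ Ψ ∧ exprLe Λ Ψ Φ

/-- The minimal normal modal logic `K`: (semantically) the set of formulas valid in all
Kripke models. -/
def KLogic : Set MF :=
  {φ | ∀ (W : Type) (R : W → W → Prop) (V : ℕ → W → Prop) (w : W), MF.sat R V φ w}

/-! ### Boolean functions and clones -/

/-- A Boolean function of positive arity. -/
structure BFun : Type where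
  arity : ℕ
  arity_pos : 0 < arity
  eval : (Fin arity → Bool) → Bool

/-- A Boolean clone: a set of Boolean functions containing all projections and
closed under composition. -/
def IsClone (C : Set BFun) : Prop :=
  (∀ (n : ℕ) (hn : 0 < n) (k : Fin n), (⟨n, hn, fun v => v k⟩ : BFun) ∈ C) ∧
  (∀ f ∈ C, ∀ (m : ℕ) (hm : 0 < m) (g : Fin (BFun.arity f) → (Fin m → Bool) → Bool),
    (∀ i, (⟨m, hm, g i⟩ : BFun) ∈ C) →
    (⟨m, hm, fun v => f.eval (fun i => g i v)⟩ : BFun) ∈ C)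

/-- The clone generated by a set of Boolean functions. -/
def cloneGen (O : Set BFun) : Set BFun := ⋂₀ {C : Set BFun | IsClone C ∧ O ⊆ C}

/-- `O ≼ O'`: the clone generated by `O` is contained in the clone generated by `O'`. -/
def cloneLe (O O' : Set BFun) : Prop := cloneGen O ⊆ cloneGen O'

/-- The constant-true unary Boolean function. -/
def bfTop : BFun := ⟨1, Nat.one_pos, fun _ => true⟩
/-- The constant-false unary Boolean function. -/
def bfBot : BFun := ⟨1, Nat.one_pos, fun _ => false⟩
/-- Negation. -/
def bfNot : BFun := ⟨1, Nat.one_pos, fun v => !(v 0)⟩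
/-- Binary conjunction. -/
def bfAnd : BFun := ⟨2, Nat.succ_pos 1, fun v => v 0 && v 1⟩
/-- Binary disjunction. -/
def bfOr : BFun := ⟨2, Nat.succ_pos 1, fun v => v 0 || v 1⟩
/-- Ternary exclusive or `x ⊕ y ⊕ z`. -/
def bf3Xor : BFun := ⟨3, Nat.succ_pos 2, fun v => (v 0).xor ((v 1).xor (v 2))⟩
/-- `oxor(x,y,z) = x ∨ (y ⊕ z)`. -/
def bfOxor : BFun := ⟨3, Nat.succ_pos 2, fun v => v 0 || ((v 1).xor (v 2))⟩
/-- `aimp(x,y,z) = x ∧ (y → z)`. -/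
def bfAimp : BFun := ⟨3, Nat.succ_pos 2, fun v => v 0 && (!(v 1) || v 2)⟩

/-- The (purely propositional) formula `φ` defines the Boolean function `f`. -/
def definesBF (φ : MF) (f : BFun) : Prop :=
  φ.isProp ∧ ∀ v : ℕ → Bool, φ.propEval v = f.eval (fun i => v i.val)

/-- The generating set of formulas of the simple fragment `ML_{M ∪ O}`, where
`M ⊆ {◇,□}` is specified by the two Booleans `hd` (for `◇`) and `hb` (for `□`). -/
def MOgen (hd hb : Bool) (O : Set BFun) : Set MF :=
  {φ | (hd = true ∧ φ = MF.dia (MF.var 0)) ∨ (hb = true ∧ φ = MF.box (MF.var 0)) ∨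
    ∃ f ∈ O, definesBF φ f}

/-- `Clos^Λ_M(O)`: the set of Boolean functions `f` such that some propositional formula
defining `f` is `Λ`-equivalent to some `ML_{M ∪ O}`-formula. -/
def Clos (Λ : Set MF) (hd hb : Bool) (O : Set BFun) : Set BFun :=
  {f | ∃ φ ψ : MF, definesBF φ f ∧ MLFrag (MOgen hd hb O) ψ ∧ (φ.iff ψ) ∈ Λ}

/-- `β(Φ)`: the set of Boolean functions defined by propositional formulas in `Φ`. -/
def betaBF (Φ : Set MF) : Set BFun := {f | ∃ φ ∈ Φ, definesBF φ f}

/-- A set of modal formulas is simple if each member is `◇x`, `□x`, or purely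
propositional. -/
def IsSimpleSet (Φ : Set MF) : Prop :=
  ∀ φ ∈ Φ, (∃ n, φ = MF.dia (MF.var n)) ∨ (∃ n, φ = MF.box (MF.var n)) ∨ φ.isProp

/-- `Φ` is `M`-simple (with `M` given by `hd`, `hb`): simple, and the modal operators
among its members are exactly those in `M`. -/
def IsMSimpleSet (hd hb : Bool) (Φ : Set MF) : Prop :=
  IsSimpleSet Φ ∧ ((∃ n, MF.dia (MF.var n) ∈ Φ) ↔ hd = true) ∧
    ((∃ n, MF.box (MF.var n) ∈ Φ) ↔ hb = true)

/-! ### Propositional fragments `PL_O` -/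

/-- Formulas of the propositional fragment `PL_O`. -/
inductive PLF (O : Set BFun) : Type
  | var : ℕ → PLF O
  | app : (f : BFun) → f ∈ O → (Fin f.arity → PLF O) → PLF O

namespace PLF

variable {O : Set BFun}

/-- Evaluation of a `PL_O`-formula under a truth assignment. -/
def eval (v : ℕ → Bool) : PLF O → Bool
  | .var n => v n
  | .app f _ args => f.eval (fun i => (args i).eval v)

/-- The variables occurring in a `PL_O`-formula. -/
def pvars : PLF O → Set ℕ
  | .var n => {n}
  | .app _ _ args => ⋃ i, (args i).pvars

/-- The set of subformulas of a `PL_O`-formula. -/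
def subf : PLF O → Set (PLF O)
  | .var n => {PLF.var n}
  | .app f h args => insert (PLF.app f h args) (⋃ i, (args i).subf)

/-- `|φ|_dag`: the number of distinct subformulas. -/
noncomputable def dagSize (φ : PLF O) : ℕ := φ.subf.ncard

/-- Equivalence of propositional formulas. -/
def equivPLF (φ ψ : PLF O) : Prop := ∀ v, φ.eval v = ψ.eval v

/-- `φ` fits the labeled example `(V, lab)`. -/
def fits (φ : PLF O) (e : (ℕ → Bool) × Bool) : Prop := φ.eval e.1 = e.2

end PLF

/-- `E` uniquely characterizes `φ` with respect to the class `L` of formulas. -/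
def uniqCharPL {O : Set BFun} (φ : PLF O) (L : Set (PLF O))
    (E : Set ((ℕ → Bool) × Bool)) : Prop :=
  (∀ e ∈ E, φ.fits e) ∧ ∀ ψ ∈ L, (∀ e ∈ E, ψ.fits e) → φ.equivPLF ψ

/-! ### Concept classes and PC-reductions -/

/-- A concept `c` fits the labeled example `(e, lab)`. -/
def ccFits {C : Type*} {E : Type*} (l : C → Set E) (c : C) (e : E × Bool) : Prop :=
  e.1 ∈ l c ↔ e.2 = true

/-- `S` uniquely characterizes the concept `c` within the concept class given by `l`. -/
def ccUniqChar {C : Type*} {E : Type*} (l : C → Set E) (c : C) (S : Set (E × Bool)) : Prop :=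
  (∀ e ∈ S, ccFits l c e) ∧ ∀ c', (∀ e ∈ S, ccFits l c' e) → l c' = l c

/-- A PC-reduction between concept classes. -/
structure PCRed {C1 : Type*} {E1 : Type*} {C2 : Type*} {E2 : Type*}
    (l1 : C1 → Set E1) (l2 : C2 → Set E2) where
  fc : C1 → C2
  he : E1 → E2
  cond1 : ∀ c e, e ∈ l1 c ↔ he e ∈ l2 (fc c)
  cond2 : ∀ e : E2, (∀ c, e ∈ l2 (fc c)) ∨ (∀ c, e ∉ l2 (fc c)) ∨
    ∃ e' : E1, {c | e ∈ l2 (fc c)} = {c | e' ∈ l1 c}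

/-- Extend an assignment on `PROP` to all variables (by `false` elsewhere). -/
def extAssign (PROP : Finset ℕ) (v : {x // x ∈ PROP} → Bool) : ℕ → Bool :=
  fun n => if h : n ∈ PROP then v ⟨n, h⟩ else false

/-- The concept class `PL_O[PROP]`: concepts are `PL_O`-formulas with variables in `PROP`,
examples are truth assignments on `PROP`. -/
def plSem (O : Set BFun) (PROP : Finset ℕ) :
    {φ : PLF O // φ.pvars ⊆ ↑PROP} → Set ({x // x ∈ PROP} → Bool) :=
  fun φ => {v | φ.1.eval (extAssign PROP v) = true}

/-! ### Simple modal fragments as syntax, and finite pointed Kripke models -/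

/-- Formulas of the simple modal fragment `ML_{M ∪ O}` (as a syntax): Boolean connectives
from `O`, plus `◇` if `hd` and `□` if `hb`. -/
inductive MLF (O : Set BFun) (hd hb : Bool) : Type
  | var : ℕ → MLF O hd hb
  | app : (f : BFun) → f ∈ O → (Fin f.arity → MLF O hd hb) → MLF O hd hb
  | dia : hd = true → MLF O hd hb → MLF O hd hb
  | box : hb = true → MLF O hd hb → MLF O hd hb

/-- Propositional application of a Boolean function to propositions. -/
def BFun.evalP (f : BFun) (P : Fin f.arity → Prop) : Prop :=
  f.eval (fun i => @decide (P i) (Classical.propDecidable _)) = true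

namespace MLF

variable {O : Set BFun} {hd hb : Bool}

/-- Kripke satisfaction for simple-fragment formulas. -/
def msat {W : Type} (R : W → W → Prop) (V : ℕ → W → Prop) :
    MLF O hd hb → W → Prop
  | .var n, w => V n w
  | .app f _ args, w => f.evalP (fun i => msat R V (args i) w)
  | .dia _ φ, w => ∃ u, R w u ∧ msat R V φ u
  | .box _ φ, w => ∀ u, R w u → msat R V φ u

/-- Variables of a simple-fragment formula. -/
def mvars : MLF O hd hb → Set ℕ
  | .var n => {n}
  | .app _ _ args => ⋃ i, (args i).mvars
  | .dia _ φ => φ.mvars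
  | .box _ φ => φ.mvars

end MLF

/-- A finite pointed Kripke model. -/
structure FPModel : Type 1 where
  W : Type
  fin : Finite W
  R : W → W → Prop
  V : ℕ → W → Prop
  pt : W

/-- The concept class `ML_{O,∘}[{p}]` (with `p` the variable `0`): concepts are
simple-fragment formulas over the single variable `p`, examples are finite pointed
Kripke models. -/
def mlSem (O : Set BFun) (hd hb : Bool) :
    {φ : MLF O hd hb // φ.mvars ⊆ {0}} → Set FPModel :=
  fun φ => {M | MLF.msat M.R M.V φ.1 M.pt}

/-- Satisfaction of a modal formula in a finite pointed Kripke model. -/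
def msatMF (M : FPModel) (φ : MF) : Prop := MF.sat M.R M.V φ M.pt

/-- A modal formula fits a labeled example (a finite pointed model with a label). -/
def fitsMF (φ : MF) (e : FPModel × Bool) : Prop := msatMF e.1 φ ↔ e.2 = true

/-- `K`-equivalence of modal formulas: truth at the same worlds of all Kripke models. -/
def KequivMF (φ ψ : MF) : Prop :=
  ∀ (W : Type) (R : W → W → Prop) (V : ℕ → W → Prop) (w : W),
    MF.sat R V φ w ↔ MF.sat R V ψ w

/-- `E` uniquely characterizes `φ` relative to the fragment `L` (with respect to `K`). -/
def uniqCharMF (φ : MF) (L : Set MF) (E : Set (FPModel × Bool)) : Prop :=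
  (∀ e ∈ E, fitsMF φ e) ∧ ∀ ψ ∈ L, (∀ e ∈ E, fitsMF ψ e) → KequivMF φ ψ

/-- `ML_Φ[P]`: the fragment generated by `Φ`, restricted to variables in `P`. -/
def fragSimple (Φ : Set MF) (P : Set ℕ) : Set MF :=
  {φ | MLFrag Φ φ ∧ φ.vars ⊆ P}

/-- `ML_{M∪O}[P]`. -/
def fragMO (hd hb : Bool) (O : Set BFun) (P : Set ℕ) : Set MF :=
  fragSimple (MOgen hd hb O) P

/-- For a simple set `Φ`: the modal operators of `Φ` are among those specified by
`hd`, `hb`, and `β(Φ)` is contained in the clone generated by `O`. -/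
def simpleLeOps (Φ : Set MF) (O : Set BFun) (hd hb : Bool) : Prop :=
  ((∃ n, MF.dia (MF.var n) ∈ Φ) → hd = true) ∧
  ((∃ n, MF.box (MF.var n) ∈ Φ) → hb = true) ∧
  cloneGen (betaBF Φ) ⊆ cloneGen O

/-- Decoding of a natural number as a labeled example (a finite pointed Kripke model with
a Boolean label). -/
def decodeEx (c : ℕ) : FPModel × Bool :=
  match Denumerable.ofNat (ℕ × List (ℕ × ℕ) × List (ℕ × ℕ) × ℕ × ℕ) c with
  | (n, edges, val, pt, b) =>
    (⟨Fin (n + 1), inferInstance,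
      fun u v => (u.val, v.val) ∈ edges,
      fun k w => (k, w.val) ∈ val,
      ⟨pt % (n + 1), Nat.mod_lt pt (Nat.succ_pos n)⟩⟩, b % 2 == 1)

/-! ### Auxiliary material for stmt15 -/

namespace Stmt15

open PLF

lemma memO : bfOxor ∈ ({bfOxor} : Set BFun) := rfl
lemma memA : bfAimp ∈ ({bfAimp} : Set BFun) := rfl

def mkOxor (a b c : PLF ({bfOxor} : Set BFun)) : PLF ({bfOxor} : Set BFun) :=
  .app bfOxor memO ![a, b, c]

def mkAimp (a b c : PLF ({bfAimp} : Set BFun)) : PLF ({bfAimp} : Set BFun) :=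
  .app bfAimp memA ![a, b, c]

lemma mkOxor_eval (a b c : PLF ({bfOxor} : Set BFun)) (v : ℕ → Bool) :
    (mkOxor a b c).eval v = (a.eval v || xor (b.eval v) (c.eval v)) := rfl

lemma mkAimp_eval (a b c : PLF ({bfAimp} : Set BFun)) (v : ℕ → Bool) :
    (mkAimp a b c).eval v = (a.eval v && (!(b.eval v) || c.eval v)) := rfl

lemma evalvarO (u : ℕ → Bool) (n : ℕ) :
    PLF.eval u (PLF.var n : PLF ({bfOxor} : Set BFun)) = u n := rfl

lemma evalvarA (u : ℕ → Bool) (n : ℕ) :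
    PLF.eval u (PLF.var n : PLF ({bfAimp} : Set BFun)) = u n := rfl

lemma pvarvar {O : Set BFun} (n : ℕ) : (PLF.var n : PLF O).pvars = {n} := rfl

lemma mkOxor_pvars (a b c : PLF ({bfOxor} : Set BFun)) :
    (mkOxor a b c).pvars = a.pvars ∪ b.pvars ∪ c.pvars := by
  ext x
  simp only [mkOxor, PLF.pvars, Set.mem_iUnion, Set.mem_union]
  constructor
  · rintro ⟨i, hi⟩
    rcases i with ⟨iv, hlt⟩
    have hlt' : iv < 3 := hlt
    interval_cases iv
    · exact Or.inl (Or.inl hi)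
    · exact Or.inl (Or.inr hi)
    · exact Or.inr hi
  · rintro ((h | h) | h)
    · exact ⟨⟨0, by decide⟩, by exact h⟩
    · exact ⟨⟨1, by decide⟩, by exact h⟩
    · exact ⟨⟨2, by decide⟩, by exact h⟩

lemma mkAimp_pvars (a b c : PLF ({bfAimp} : Set BFun)) :
    (mkAimp a b c).pvars = a.pvars ∪ b.pvars ∪ c.pvars := by
  ext x
  simp only [mkAimp, PLF.pvars, Set.mem_iUnion, Set.mem_union]
  constructor
  · rintro ⟨i, hi⟩
    rcases i with ⟨iv, hlt⟩
    have hlt' : iv < 3 := hlt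
    interval_cases iv
    · exact Or.inl (Or.inl hi)
    · exact Or.inl (Or.inr hi)
    · exact Or.inr hi
  · rintro ((h | h) | h)
    · exact ⟨⟨0, by decide⟩, by exact h⟩
    · exact ⟨⟨1, by decide⟩, by exact h⟩
    · exact ⟨⟨2, by decide⟩, by exact h⟩

lemma arity3 {f : BFun} (hf : f ∈ ({bf3Xor} : Set BFun)) : f.arity = 3 := by
  rw [Set.eq_of_mem_singleton hf]; rfl

/-- The `oxor` combinator simulating ternary xor (when `w` is false). -/
def combO (w : ℕ) (A B C : PLF ({bfOxor} : Set BFun)) : PLF ({bfOxor} : Set BFun) :=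
  mkOxor (.var w) A (mkOxor (.var w) B C)

/-- The `aimp` combinator simulating ternary xor (when `w` is true). -/
def combA (w : ℕ) (A B C : PLF ({bfAimp} : Set BFun)) : PLF ({bfAimp} : Set BFun) :=
  mkAimp (mkAimp (.var w) (mkAimp (mkAimp (.var w) A B) (.var w) (mkAimp (.var w) B A)) C)
    (.var w)
    (mkAimp (.var w) C (mkAimp (mkAimp (.var w) A B) (.var w) (mkAimp (.var w) B A)))

lemma combO_eval_true (w : ℕ) (u : ℕ → Bool) (hu : u w = true)
    (A B C : PLF ({bfOxor} : Set BFun)) : (combO w A B C).eval u = true := by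
  simp only [combO, mkOxor_eval, evalvarO, hu, Bool.true_or]

lemma combO_eval_false (w : ℕ) (u : ℕ → Bool) (hu : u w = false)
    (A B C : PLF ({bfOxor} : Set BFun)) :
    (combO w A B C).eval u = xor (A.eval u) (xor (B.eval u) (C.eval u)) := by
  simp only [combO, mkOxor_eval, evalvarO, hu, Bool.false_or]

lemma combA_eval_false (w : ℕ) (u : ℕ → Bool) (hu : u w = false)
    (A B C : PLF ({bfAimp} : Set BFun)) : (combA w A B C).eval u = false := by
  simp only [combA, mkAimp_eval, evalvarA, hu, Bool.false_and, Bool.not_false, Bool.true_or,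
    Bool.and_true]

lemma combA_eval_true (w : ℕ) (u : ℕ → Bool) (hu : u w = true)
    (A B C : PLF ({bfAimp} : Set BFun)) :
    (combA w A B C).eval u = xor (A.eval u) (xor (B.eval u) (C.eval u)) := by
  simp only [combA, mkAimp_eval, evalvarA, hu, Bool.not_true, Bool.false_or, Bool.true_and]
  generalize PLF.eval u A = a
  generalize PLF.eval u B = b
  generalize PLF.eval u C = c
  cases a <;> cases b <;> cases c <;> rfl

lemma combO_pvars (w : ℕ) (A B C : PLF ({bfOxor} : Set BFun)) :
    (combO w A B C).pvars ⊆ {w} ∪ A.pvars ∪ B.pvars ∪ C.pvars := by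
  intro x hx
  simp only [combO, mkOxor_pvars, pvarvar, Set.mem_union, Set.mem_singleton_iff] at hx ⊢
  tauto

lemma combA_pvars (w : ℕ) (A B C : PLF ({bfAimp} : Set BFun)) :
    (combA w A B C).pvars ⊆ {w} ∪ A.pvars ∪ B.pvars ∪ C.pvars := by
  intro x hx
  simp only [combA, mkAimp_pvars, pvarvar, Set.mem_union, Set.mem_singleton_iff] at hx ⊢
  tauto

/-- Translation into the `oxor` fragment. -/
def trO (w : ℕ) : PLF ({bf3Xor} : Set BFun) → PLF ({bfOxor} : Set BFun)
  | .var n => mkOxor (.var w) (.var n) (.var w)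
  | .app _ hf args =>
      combO w (trO w (args ⟨0, by rw [arity3 hf]; decide⟩))
        (trO w (args ⟨1, by rw [arity3 hf]; decide⟩))
        (trO w (args ⟨2, by rw [arity3 hf]; decide⟩))

/-- Translation into the `aimp` fragment. -/
def trA (w : ℕ) : PLF ({bf3Xor} : Set BFun) → PLF ({bfAimp} : Set BFun)
  | .var n => mkAimp (.var w) (.var w) (.var n)
  | .app _ hf args =>
      combA w (trA w (args ⟨0, by rw [arity3 hf]; decide⟩))
        (trA w (args ⟨1, by rw [arity3 hf]; decide⟩))
        (trA w (args ⟨2, by rw [arity3 hf]; decide⟩))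

lemma eval3 {f : BFun} (hf : f ∈ ({bf3Xor} : Set BFun))
    (args : Fin f.arity → PLF ({bf3Xor} : Set BFun)) (u : ℕ → Bool) :
    PLF.eval u (.app f hf args) =
      xor (PLF.eval u (args ⟨0, by rw [arity3 hf]; decide⟩))
        (xor (PLF.eval u (args ⟨1, by rw [arity3 hf]; decide⟩))
          (PLF.eval u (args ⟨2, by rw [arity3 hf]; decide⟩))) := by
  have hf' : f = bf3Xor := Set.eq_of_mem_singleton hf
  subst hf'
  rfl

lemma pvars3 {f : BFun} (hf : f ∈ ({bf3Xor} : Set BFun))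
    (args : Fin f.arity → PLF ({bf3Xor} : Set BFun)) {x : ℕ} {i : Fin f.arity}
    (h : x ∈ (args i).pvars) : x ∈ PLF.pvars (.app f hf args) :=
  Set.mem_iUnion.mpr ⟨i, h⟩

lemma trO_eval_true (w : ℕ) (u : ℕ → Bool) (hu : u w = true)
    (φ : PLF ({bf3Xor} : Set BFun)) : (trO w φ).eval u = true := by
  induction φ with
  | var n => simp only [trO, mkOxor_eval, evalvarO, hu, Bool.true_or]
  | app f hf args ih => rw [trO, combO_eval_true w u hu]

lemma trO_eval_false (w : ℕ) (u : ℕ → Bool) (hu : u w = false)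
    (φ : PLF ({bf3Xor} : Set BFun)) : (trO w φ).eval u = φ.eval u := by
  induction φ with
  | var n =>
      simp only [trO, mkOxor_eval, evalvarO, hu, Bool.false_or, Bool.xor_false]
      rfl
  | app f hf args ih =>
      rw [eval3 hf, trO, combO_eval_false w u hu, ih, ih, ih]

lemma trA_eval_false (w : ℕ) (u : ℕ → Bool) (hu : u w = false)
    (φ : PLF ({bf3Xor} : Set BFun)) : (trA w φ).eval u = false := by
  induction φ with
  | var n => simp only [trA, mkAimp_eval, evalvarA, hu, Bool.false_and]
  | app f hf args ih => rw [trA, combA_eval_false w u hu]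

lemma trA_eval_true (w : ℕ) (u : ℕ → Bool) (hu : u w = true)
    (φ : PLF ({bf3Xor} : Set BFun)) : (trA w φ).eval u = φ.eval u := by
  induction φ with
  | var n =>
      simp only [trA, mkAimp_eval, evalvarA, hu, Bool.not_true, Bool.false_or, Bool.true_and]
      rfl
  | app f hf args ih =>
      rw [eval3 hf, trA, combA_eval_true w u hu, ih, ih, ih]

lemma trO_pvars (w : ℕ) (φ : PLF ({bf3Xor} : Set BFun)) :
    (trO w φ).pvars ⊆ insert w φ.pvars := by
  induction φ with
  | var n =>
      intro x hx
      simp only [trO, mkOxor_pvars, pvarvar, Set.mem_union, Set.mem_singleton_iff] at hx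
      simp only [Set.mem_insert_iff, pvarvar, Set.mem_singleton_iff]
      tauto
  | app f hf args ih =>
      intro x hx
      rw [trO] at hx
      rcases combO_pvars w _ _ _ hx with ((h | h) | h) | h
      · exact Set.mem_insert_iff.mpr (Or.inl h)
      · rcases ih _ h with h' | h'
        · exact Set.mem_insert_iff.mpr (Or.inl h')
        · exact Set.mem_insert_of_mem _ (pvars3 hf args h')
      · rcases ih _ h with h' | h'
        · exact Set.mem_insert_iff.mpr (Or.inl h')
        · exact Set.mem_insert_of_mem _ (pvars3 hf args h')
      · rcases ih _ h with h' | h'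
        · exact Set.mem_insert_iff.mpr (Or.inl h')
        · exact Set.mem_insert_of_mem _ (pvars3 hf args h')

lemma trA_pvars (w : ℕ) (φ : PLF ({bf3Xor} : Set BFun)) :
    (trA w φ).pvars ⊆ insert w φ.pvars := by
  induction φ with
  | var n =>
      intro x hx
      simp only [trA, mkAimp_pvars, pvarvar, Set.mem_union, Set.mem_singleton_iff] at hx
      simp only [Set.mem_insert_iff, pvarvar, Set.mem_singleton_iff]
      tauto
  | app f hf args ih =>
      intro x hx
      rw [trA] at hx
      rcases combA_pvars w _ _ _ hx with ((h | h) | h) | h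
      · exact Set.mem_insert_iff.mpr (Or.inl h)
      · rcases ih _ h with h' | h'
        · exact Set.mem_insert_iff.mpr (Or.inl h')
        · exact Set.mem_insert_of_mem _ (pvars3 hf args h')
      · rcases ih _ h with h' | h'
        · exact Set.mem_insert_iff.mpr (Or.inl h')
        · exact Set.mem_insert_of_mem _ (pvars3 hf args h')
      · rcases ih _ h with h' | h'
        · exact Set.mem_insert_iff.mpr (Or.inl h')
        · exact Set.mem_insert_of_mem _ (pvars3 hf args h')

lemma eval_congr {O : Set BFun} (φ : PLF O) (u v : ℕ → Bool)
    (h : ∀ n ∈ φ.pvars, u n = v n) : φ.eval u = φ.eval v := by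
  induction φ with
  | var n => exact h n rfl
  | app f hf args ih =>
      simp only [PLF.eval]
      congr 1
      funext i
      exact ih i (fun n hn => h n (Set.mem_iUnion.mpr ⟨i, hn⟩))

end Stmt15
theorem stmt15 (PROP : Finset ℕ) (w : ℕ) (hw : w ∉ PROP) :
    Nonempty (PCRed (plSem {bf3Xor} PROP) (plSem {bfOxor} (insert w PROP))) ∧
    Nonempty (PCRed (plSem {bf3Xor} PROP) (plSem {bfAimp} (insert w PROP))) := by
  classical
  constructor
  · -- oxor
    refine ⟨⟨fun φ => ⟨Stmt15.trO w φ.1, ?_⟩,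
        fun e x => if h : x.1 ∈ PROP then e ⟨x.1, h⟩ else false, ?_, ?_⟩⟩
    · refine (Stmt15.trO_pvars w φ.1).trans ?_
      intro x hx
      rcases hx with h | h
      · simp [h]
      · simp [Finset.mem_insert]
        exact Or.inr (φ.2 h)
    · intro c e
      have hue : extAssign (insert w PROP)
          (fun x => if h : x.1 ∈ PROP then e ⟨x.1, h⟩ else false) = extAssign PROP e := by
        funext n
        unfold extAssign
        by_cases h1 : n ∈ PROP
        · simp [h1, Finset.mem_insert_of_mem h1]
        · by_cases h2 : n ∈ insert w PROP <;> simp [h1, h2]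
      simp only [plSem, Set.mem_setOf_eq, hue]
      rw [Stmt15.trO_eval_false w _ (by unfold extAssign; simp [hw]) c.1]
    · intro e
      by_cases hew : e ⟨w, Finset.mem_insert_self w PROP⟩ = true
      · left
        intro c
        simp only [plSem, Set.mem_setOf_eq]
        apply Stmt15.trO_eval_true
        unfold extAssign
        simp [Finset.mem_insert_self, hew]
      · right; right
        refine ⟨fun x => e ⟨x.1, Finset.mem_insert_of_mem x.2⟩, ?_⟩
        ext c
        simp only [plSem, Set.mem_setOf_eq]
        rw [Stmt15.trO_eval_false w _ (by
          unfold extAssign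
          simp only [Finset.mem_insert_self, dif_pos]
          exact Bool.not_eq_true _ ▸ hew) c.1]
        constructor <;> intro h <;> rw [← h] <;> apply Stmt15.eval_congr <;>
          · intro n hn
            have hnP : n ∈ PROP := c.2 hn
            unfold extAssign
            simp [hnP, Finset.mem_insert_of_mem hnP]
  · -- aimp
    refine ⟨⟨fun φ => ⟨Stmt15.trA w φ.1, ?_⟩,
        fun e x => if h : x.1 ∈ PROP then e ⟨x.1, h⟩ else true, ?_, ?_⟩⟩
    · refine (Stmt15.trA_pvars w φ.1).trans ?_
      intro x hx
      rcases hx with h | h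
      · simp [h]
      · simp [Finset.mem_insert]
        exact Or.inr (φ.2 h)
    · intro c e
      set u2 := extAssign (insert w PROP)
          (fun x => if h : x.1 ∈ PROP then e ⟨x.1, h⟩ else true) with hu2
      have hw2 : u2 w = true := by
        rw [hu2]; unfold extAssign
        simp [Finset.mem_insert_self, hw]
      simp only [plSem, Set.mem_setOf_eq]
      rw [Stmt15.trA_eval_true w u2 hw2 c.1]
      have : PLF.eval u2 c.1 = PLF.eval (extAssign PROP e) c.1 := by
        apply Stmt15.eval_congr
        intro n hn
        have hnP : n ∈ PROP := c.2 hn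
        rw [hu2]; unfold extAssign
        simp [hnP, Finset.mem_insert_of_mem hnP]
      rw [this]
    · intro e
      by_cases hew : e ⟨w, Finset.mem_insert_self w PROP⟩ = true
      · right; right
        refine ⟨fun x => e ⟨x.1, Finset.mem_insert_of_mem x.2⟩, ?_⟩
        ext c
        simp only [plSem, Set.mem_setOf_eq]
        rw [Stmt15.trA_eval_true w _ (by
          unfold extAssign
          simp only [Finset.mem_insert_self, dif_pos]
          exact hew) c.1]
        constructor <;> intro h <;> rw [← h] <;> apply Stmt15.eval_congr <;>
          · intro n hn
            have hnP : n ∈ PROP := c.2 hn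
            unfold extAssign
            simp [hnP, Finset.mem_insert_of_mem hnP]
      · right; left
        intro c
        simp only [plSem, Set.mem_setOf_eq]
        rw [Stmt15.trA_eval_false w _ (by
          unfold extAssign
          simp only [Finset.mem_insert_self, dif_pos]
          exact Bool.not_eq_true _ ▸ hew) c.1]
        simp
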